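/- Let k and l be positive integers, and let t = a^k b^l a (the word consisting of k copies of a letter a, followed by l copies of a distinct letter b, followed by one more copy of a). Then every finite simple graph is t-representable. -/

import Mathlib

variable {V : Type*}

/-- The restriction of a word `w` to the letters `x` and `y`. -/
def restrictWord [DecidableEq V] (w : List V) (x y : V) : List V :=
  w.filter fun z => decide (z = x ∨ z = y)

/-- A pattern on two distinct letters `a`, `b` is encoded as a `List Bool`,
where `false` stands for `a` and `true` stands for `b`.  `patternWord t c d` is the word
obtained from the pattern `t` by the substitution `a ↦ c`, `b ↦ d`. -/
def patternWord {α : Type*} (t : List Bool) (c d : α) : List α :=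
  t.map fun b => if b then d else c

/-- `u` contains the pattern `t`: some contiguous factor of `u` is isomorphic to `t`,
i.e. is the image of `t` under an injective substitution of the two letters. -/
def ContainsPattern {α : Type*} (t : List Bool) (u : List α) : Prop :=
  ∃ c d : α, c ≠ d ∧ patternWord t c d <:+: u

/-- `w` `t`-represents the simple graph `G`: every vertex occurs in `w`, and two distinct
vertices `x`, `y` are adjacent iff the restriction of `w` to `{x, y}` avoids the pattern `t`. -/
def TRepresents [DecidableEq V] (t : List Bool) (G : SimpleGraph V) (w : List V) : Prop :=
  (∀ v : V, v ∈ w) ∧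
  ∀ x y : V, x ≠ y → (G.Adj x y ↔ ¬ ContainsPattern t (restrictWord w x y))

/-- `G` is `t`-representable if some word `t`-represents it. -/
def TRepresentable [DecidableEq V] (t : List Bool) (G : SimpleGraph V) : Prop :=
  ∃ w : List V, TRepresents t G w


namespace Akbla


/-- The word obtained by concatenating blocks: `(z, a)` contributes `z^a`. -/
def blocksWord {α : Type*} (B : List (α × ℕ)) : List α :=
  B.flatMap fun p => List.replicate p.2 p.1

@[simp] lemma blocksWord_nil {α : Type*} : blocksWord ([] : List (α × ℕ)) = [] := rfl

@[simp] lemma blocksWord_cons {α : Type*} (p : α × ℕ) (B : List (α × ℕ)) :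
    blocksWord (p :: B) = List.replicate p.2 p.1 ++ blocksWord B := rfl

@[simp] lemma blocksWord_append {α : Type*} (B C : List (α × ℕ)) :
    blocksWord (B ++ C) = blocksWord B ++ blocksWord C :=
  List.flatMap_append ..

/-- A word built from blocks of length `≥ l + 1` has no factor `c · dˡ · c`. -/
lemma no_small_factor {α : Type*} {l : ℕ} (hl : 1 ≤ l) :
    ∀ (B : List (α × ℕ)), (∀ p ∈ B, l + 1 ≤ p.2) →
      ∀ c d : α, c ≠ d → ∀ s e : List α,
        s ++ (c :: (List.replicate l d ++ [c])) ++ e ≠ blocksWord B := by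
  intro B
  induction B with
  | nil => intro _ c d _ s e h; simp [blocksWord] at h
  | cons p B ih =>
    obtain ⟨z, a⟩ := p
    intro hB c d hcd s e h
    have ha : l + 1 ≤ a := hB (z, a) List.mem_cons_self
    set Q : List α := c :: (List.replicate l d ++ [c]) with hQ
    rw [blocksWord_cons] at h
    have hpre : s <+: List.replicate a z ++ blocksWord B := by
      rw [← h]
      exact (List.prefix_append s Q).trans (List.prefix_append (s ++ Q) e)
    rcases le_or_gt a s.length with hle | hlt
    · have h2 : List.replicate a z <+: s :=
        List.prefix_of_prefix_length_le (List.prefix_append _ _) hpre (by simpa using hle)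
      obtain ⟨s1, rfl⟩ := h2
      refine ih (fun p hp => hB p (List.mem_cons_of_mem _ hp)) c d hcd s1 e ?_
      apply List.append_cancel_left (as := List.replicate a z)
      rw [← hQ, ← List.append_assoc, ← List.append_assoc]
      exact h
    · have h2 : s <+: List.replicate a z :=
        List.prefix_of_prefix_length_le hpre (List.prefix_append _ _)
          (by simpa using le_of_lt hlt)
      have hs : s = List.replicate s.length z :=
        List.eq_replicate_length.mpr fun b hb => List.eq_of_mem_replicate (h2.subset hb)
      obtain ⟨t, ht⟩ : ∃ t, a = s.length + (t + 1) := ⟨a - s.length - 1, by omega⟩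
      rw [hs, ht, List.replicate_add] at h
      have h3 : Q ++ e = List.replicate (t + 1) z ++ blocksWord B := by
        apply List.append_cancel_left (as := List.replicate s.length z)
        rw [← List.append_assoc, ← List.append_assoc]
        exact h
      rw [List.replicate_succ, hQ] at h3
      simp only [List.cons_append, List.cons.injEq] at h3
      obtain ⟨hcz, h4⟩ := h3
      cases t with
      | succ t' =>
        obtain ⟨l', hl'⟩ : ∃ l', l = l' + 1 := ⟨l - 1, by omega⟩
        rw [hl'] at h4
        simp only [List.replicate_succ, List.cons_append, List.cons.injEq] at h4
        exact hcd (hcz.trans h4.1.symm)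
      | zero =>
        simp only [List.replicate, List.nil_append] at h4
        cases B with
        | nil =>
          rw [blocksWord_nil] at h4
          obtain ⟨l', hl'⟩ : ∃ l', l = l' + 1 := ⟨l - 1, by omega⟩
          rw [hl'] at h4
          simp [List.replicate_succ] at h4
        | cons q B' =>
          obtain ⟨y, b⟩ := q
          have hb : l + 1 ≤ b := hB (y, b) (List.mem_cons_of_mem _ List.mem_cons_self)
          obtain ⟨b', hb'⟩ : ∃ b', b = l + (b' + 1) := ⟨b - l - 1, by omega⟩
          rw [blocksWord_cons] at h4
          rw [hb', List.replicate_add, List.append_assoc, List.append_assoc] at h4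
          have h5 := List.append_inj h4 (by simp)
          have hdy : d = y := by
            have : d ∈ List.replicate l y := h5.1 ▸ List.mem_replicate.mpr ⟨by omega, rfl⟩
            exact List.eq_of_mem_replicate this
          have hcy : c = y := by
            have := h5.2
            rw [List.replicate_succ] at this
            simp only [List.cons_append, List.singleton_append, List.cons.injEq] at this
            exact this.1
          exact hcd (hcy.trans hdy.symm)

lemma filter_flatMap {α β : Type*} (L : List α) (f : α → List β) (p : β → Bool) :
    (L.flatMap f).filter p = L.flatMap fun a => (f a).filter p := by
  induction L with
  | nil => rfl
  | cons a L ih => simp [List.flatMap_cons, List.filter_append, ih]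

lemma blocksWord_flatMap {α β : Type*} (L : List α) (g : α → List (β × ℕ)) :
    blocksWord (L.flatMap g) = L.flatMap fun a => blocksWord (g a) := by
  induction L with
  | nil => rfl
  | cons a L ih => simp [List.flatMap_cons, ih]

lemma flatMap_congr {α β : Type*} (L : List α) {f g : α → List β} (h : ∀ a, f a = g a) :
    L.flatMap f = L.flatMap g := by
  rw [funext h]

lemma main {V : Type*} [Fintype V] [DecidableEq V] (k l : ℕ) (hk : 1 ≤ k) (hl : 1 ≤ l)
    (G : SimpleGraph V) [DecidableRel G.Adj] :
    TRepresentable (List.replicate k false ++ List.replicate l true ++ [false]) G := by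
  set m := k + l with hmdef
  set vs := (Finset.univ : Finset V).toList with hvs
  set pairs := (vs.product vs).filter (fun p => decide (p.1 ≠ p.2 ∧ ¬ G.Adj p.1 p.2))
    with hpairs
  set gw : V × V → List V := fun q =>
    List.replicate m q.1 ++ (List.replicate l q.2 ++
      (List.replicate m q.1 ++ List.replicate m q.2)) with hgw
  set w : List V := (vs.flatMap fun v => List.replicate m v) ++ pairs.flatMap gw with hw
  have hpat : ∀ c d : V,
      patternWord (List.replicate k false ++ List.replicate l true ++ [false]) c d
        = List.replicate k c ++ (List.replicate l d ++ [c]) := by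
    intro c d
    simp [patternWord, List.append_assoc]
  have hrestrict : ∀ x y : V, restrictWord w x y =
      blocksWord ((vs.flatMap fun v => if v = x ∨ v = y then [(v, m)] else []) ++
        pairs.flatMap fun q =>
          if q.1 = x ∨ q.1 = y then
            if q.2 = x ∨ q.2 = y then [(q.1, m), (q.2, l), (q.1, m), (q.2, m)]
            else [(q.1, m + m)]
          else if q.2 = x ∨ q.2 = y then [(q.2, l + m)] else []) := by
    intro x y
    rw [hw]
    unfold restrictWord
    rw [List.filter_append, filter_flatMap, filter_flatMap, blocksWord_append,
        blocksWord_flatMap, blocksWord_flatMap]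
    congr 1
    · refine flatMap_congr _ fun v => ?_
      by_cases hv : v = x ∨ v = y <;>
        simp [List.filter_replicate, hv, blocksWord]
    · refine flatMap_congr _ fun q => ?_
      by_cases h1 : q.1 = x ∨ q.1 = y <;> by_cases h2 : q.2 = x ∨ q.2 = y <;>
        simp [hgw, List.filter_append, List.filter_replicate, h1, h2, blocksWord]
  refine ⟨w, ?_, ?_⟩
  · intro v
    refine List.mem_append.mpr (Or.inl ?_)
    exact List.mem_flatMap.mpr ⟨v, by simp [hvs], List.mem_replicate.mpr ⟨by omega, rfl⟩⟩
  · intro x y hxy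
    by_cases hadj : G.Adj x y
    · refine iff_of_true hadj ?_
      rintro ⟨c, d, hcd, hinf⟩
      obtain ⟨s, e, hse⟩ := hinf
      rw [hrestrict x y] at hse
      obtain ⟨k', rfl⟩ : ∃ k', k = k' + 1 := ⟨k - 1, by omega⟩
      rw [hpat, List.replicate_succ'] at hse
      refine no_small_factor hl
        ((vs.flatMap fun v => if v = x ∨ v = y then [(v, m)] else []) ++
          pairs.flatMap fun q =>
            if q.1 = x ∨ q.1 = y then
              if q.2 = x ∨ q.2 = y then [(q.1, m), (q.2, l), (q.1, m), (q.2, m)]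
              else [(q.1, m + m)]
            else if q.2 = x ∨ q.2 = y then [(q.2, l + m)] else [])
        ?_ c d hcd (s ++ List.replicate k' c) e ?_
      · intro p hp
        rw [List.mem_append] at hp
        rcases hp with hp | hp
        · obtain ⟨v, hv, hpv⟩ := List.mem_flatMap.mp hp
          by_cases hvxy : v = x ∨ v = y <;> simp [hvxy] at hpv
          subst hpv; simp; omega
        · obtain ⟨q, hq, hpq⟩ := List.mem_flatMap.mp hp
          rw [hpairs] at hq
          have hqprop : q.1 ≠ q.2 ∧ ¬ G.Adj q.1 q.2 := by
            simpa using (List.mem_filter.mp hq).2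
          by_cases h1 : q.1 = x ∨ q.1 = y
          · by_cases h2 : q.2 = x ∨ q.2 = y
            · exfalso
              rcases h1 with h1 | h1 <;> rcases h2 with h2 | h2
              · exact hqprop.1 (h1.trans h2.symm)
              · exact hqprop.2 (by rw [h1, h2]; exact hadj)
              · exact hqprop.2 (by rw [h1, h2]; exact hadj.symm)
              · exact hqprop.1 (h1.trans h2.symm)
            · simp [h1, h2] at hpq
              subst hpq; simp; omega
          · by_cases h2 : q.2 = x ∨ q.2 = y <;> simp [h1, h2] at hpq
            subst hpq; simp; omega
      · rw [← hse]
        simp [List.append_assoc]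
    · refine iff_of_false hadj (not_not_intro ?_)
      have hmem : (x, y) ∈ pairs := by
        rw [hpairs]
        refine List.mem_filter.mpr ⟨?_, by simp [hxy, hadj]⟩
        exact List.mem_product.mpr ⟨by simp [hvs], by simp [hvs]⟩
      obtain ⟨L1, L2, hsplit⟩ := List.append_of_mem hmem
      refine ⟨x, y, hxy, ?_⟩
      have hginf : gw (x, y) <:+: w := by
        refine ⟨(vs.flatMap fun v => List.replicate m v) ++ L1.flatMap gw,
          L2.flatMap gw, ?_⟩
        rw [hw, hsplit]
        simp [List.flatMap_append, List.flatMap_cons, List.append_assoc]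
      have hfil : (gw (x, y)).filter (fun z => decide (z = x ∨ z = y)) <:+:
          restrictWord w x y := hginf.filter _
      have hgwfil : (gw (x, y)).filter (fun z => decide (z = x ∨ z = y)) =
          List.replicate m x ++ (List.replicate l y ++
            (List.replicate m x ++ List.replicate m y)) := by
        simp [hgw, List.filter_append, List.filter_replicate]
      rw [hgwfil] at hfil
      refine List.IsInfix.trans ?_ hfil
      rw [hpat]
      obtain ⟨m', hm'⟩ : ∃ m', m = m' + 1 := ⟨m - 1, by omega⟩
      refine ⟨List.replicate l x, List.replicate m' x ++ List.replicate m y, ?_⟩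
      have e1 : List.replicate l x ++ List.replicate k x = List.replicate m x := by
        rw [List.replicate_append_replicate]; congr 1; omega
      have e4 : ∀ R : List V,
          List.replicate l x ++ (List.replicate k x ++ R) = List.replicate m x ++ R := by
        intro R; rw [← List.append_assoc, e1]
      have e5 : (x :: (List.replicate m' x ++ List.replicate m y) : List V)
          = List.replicate m x ++ List.replicate m y := by
        rw [hm']; rfl
      simp only [List.append_assoc, List.cons_append, List.singleton_append,
        List.nil_append]
      rw [e4, e5]

end Akbla

/-- For positive integers `k` and `l` and the pattern `t = aᵏ bˡ a`,
every finite simple graph is `t`-representable. -/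
theorem all_graphs_akbla_representable (k l : ℕ) (hk : 1 ≤ k) (hl : 1 ≤ l)
    {V : Type*} [Fintype V] [DecidableEq V] (G : SimpleGraph V) :
    TRepresentable (List.replicate k false ++ List.replicate l true ++ [false]) G := by
  classical
  exact Akbla.main k l hk hl G
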